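/- Let x ∈ ℚ^n and let g ∈ GL_n(E) be arbitrary, where E = k((u)) with u^e = z. If the matrix Y := g^{-1}·x̃·g + g^{-1}·τ(g) is diagonal, then all entries of Y lie in k[[u]]. -/

import Mathlib

noncomputable section

open Polynomial Matrix

variable {k : Type*} [Field k]

/-- The derivation `τ = (1/e)·u·d/du` on `E = k((u))` (where `u^e = z`),
acting coefficientwise by `n/e`. -/
def tauU (e : ℕ) (f : LaurentSeries k) : LaurentSeries k :=
  ⟨fun n => ((n : k) / (e : k)) * f.coeff n,
    f.isPWO_support'.mono (fun n hn => by
      simp only [Function.mem_support, ne_eq] at hn ⊢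
      exact fun h => hn (by rw [h, mul_zero]))⟩

/-- For `x ∈ ℚ^n`, the constant diagonal matrix `x̃ = diag(x₁, …, xₙ)`. -/
def diagQ {n : ℕ} (x : Fin n → ℚ) : Matrix (Fin n) (Fin n) (LaurentSeries k) :=
  Matrix.diagonal fun i => HahnSeries.C ((x i : k))

/-- if `g ∈ GL_n(E)` (with `E = k((u))`, `u^e = z`) is such that
`Y := g⁻¹·x̃·g + g⁻¹·τ(g)` is diagonal, then all entries of `Y` lie in `k[[u]]`. -/
theorem stmt1 [IsAlgClosed k] [CharZero k] {n : ℕ} (e : ℕ) (he : 0 < e)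
    (x : Fin n → ℚ)
    (g : Matrix (Fin n) (Fin n) (LaurentSeries k)) (hg : IsUnit g.det)
    (Y : Matrix (Fin n) (Fin n) (LaurentSeries k))
    (hY : Y = g⁻¹ * diagQ x * g + g⁻¹ * (g.map (tauU e)))
    (hdiag : ∀ i j, i ≠ j → Y i j = 0) :
    ∀ i j, ∀ m : ℤ, m < 0 → (Y i j).coeff m = 0 := by
  -- g * Y = diagQ x * g + g.map (tauU e)
  have hgY : g * Y = diagQ x * g + g.map (tauU e) := by
    rw [hY, mul_add, ← Matrix.mul_assoc, ← Matrix.mul_assoc, ← Matrix.mul_assoc,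
      Matrix.mul_nonsing_inv g hg, Matrix.one_mul, Matrix.one_mul]
  -- entrywise equation
  have key : ∀ i j, g i j * Y j j = HahnSeries.C ((x i : k)) * g i j + tauU e (g i j) := by
    intro i j
    have h1 : (g * Y) i j = g i j * Y j j := by
      rw [Matrix.mul_apply]
      exact Finset.sum_eq_single j (fun l _ hl => by rw [hdiag l j hl, mul_zero])
        (fun h => absurd (Finset.mem_univ j) h)
    rw [← h1, hgY]
    simp [Matrix.add_apply, diagQ, Matrix.diagonal_mul, Matrix.map_apply]
  intro i j m hm
  rcases ne_or_eq i j with hij | rfl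
  · rw [hdiag i j hij]; rfl
  -- i = j case
  by_cases hY0 : Y i i = 0
  · rw [hY0]; rfl
  -- pick l with g l i ≠ 0
  obtain ⟨l, hl⟩ : ∃ l, g l i ≠ 0 := by
    by_contra h
    push_neg at h
    have : g.det = 0 := Matrix.det_eq_zero_of_column_eq_zero i h
    rw [this] at hg
    exact (not_isUnit_zero hg).elim
  -- order of Y i i is ≥ 0
  have hord : 0 ≤ (Y i i).order := by
    by_contra hneg
    push_neg at hneg
    have heq := key l i
    have hcoeff := congrArg (fun f : LaurentSeries k => f.coeff ((g l i).order + (Y i i).order)) heq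
    rw [HahnSeries.coeff_mul_order_add_order] at hcoeff
    have hlt : (g l i).order + (Y i i).order < (g l i).order := by linarith
    have hrhs : (HahnSeries.C ((x l : k)) * g l i + tauU e (g l i)).coeff
        ((g l i).order + (Y i i).order) = 0 := by
      have hz : (g l i).coeff ((g l i).order + (Y i i).order) = 0 :=
        HahnSeries.coeff_eq_zero_of_lt_order hlt
      rw [HahnSeries.coeff_add, HahnSeries.C_mul_eq_smul, HahnSeries.coeff_smul]
      show _ • _ + (_ / _) * (g l i).coeff _ = 0
      rw [hz, smul_zero, mul_zero, add_zero]
    rw [hrhs] at hcoeff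
    rcases mul_eq_zero.mp hcoeff with h | h
    · exact (HahnSeries.leadingCoeff_ne_zero.mpr hl) h
    · exact (HahnSeries.leadingCoeff_ne_zero.mpr hY0) h
  exact HahnSeries.coeff_eq_zero_of_lt_order (lt_of_lt_of_le hm hord)
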